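/- arXiv:1810.13213 — 4 statements merged into one kernel-verified Lean document; each statement's English description precedes it below -/
import Mathlib

section
/- Let G be a locally compact topological group and let ℓ₁ and ℓ₂ be symmetric length functions on G, each satisfying condition (α). Suppose that ℓ₁ is bounded on the set {g ∈ G : ℓ₂(g) ≤ 1} and that ℓ₂ is bounded on the set {g ∈ G : ℓ₁(g) ≤ 1}. Then ℓ₁ and ℓ₂ are equivalent at infinity: there exist constants C, D ≥ 0 such that ℓ₁(g) ≤ C·ℓ₂(g) + D and ℓ₂(g) ≤ C·ℓ₁(g) + D for all g ∈ G. -/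
/-- A function on a topological space is locally bounded if every point has a
neighbourhood on which the function is bounded. -/
def LocallyBoundedFun {G : Type*} [TopologicalSpace G] (f : G → ℝ) : Prop :=
  ∀ x : G, ∃ s ∈ nhds x, Bornology.IsBounded (f '' s)

/-- A length function on a topological group: a locally bounded subadditive
function `ℓ : G → ℝ`. -/
def IsLengthFunction {G : Type*} [TopologicalSpace G] [Group G] (f : G → ℝ) : Prop :=
  LocallyBoundedFun f ∧ ∀ g h : G, f (g * h) ≤ f g + f h

/-- A length function is symmetric if `ℓ(e) = 0` and `ℓ(g⁻¹) = ℓ(g)`. -/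
def IsSymmetricLength {G : Type*} [Group G] (f : G → ℝ) : Prop :=
  f 1 = 0 ∧ ∀ g : G, f g⁻¹ = f g

/-- Condition (α): there is a constant `C` such that every `g` with `ℓ(g) ≥ 1`
can be connected to the identity by a chain `e = g₀, g₁, …, g_n = g` with
`ℓ(gᵢ⁻¹ g_{i+1}) ≤ 1` and `n ≤ C·ℓ(g)`. -/
def CondAlpha {G : Type*} [Group G] (f : G → ℝ) : Prop :=
  ∃ C : ℝ, ∀ g : G, 1 ≤ f g →
    ∃ (n : ℕ) (c : ℕ → G), c 0 = 1 ∧ c n = g ∧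
      (∀ i < n, f ((c i)⁻¹ * c (i + 1)) ≤ 1) ∧ (n : ℝ) ≤ C * f g

lemma stmt2_aux {G : Type*} [Group G] (ℓ₁ ℓ₂ : G → ℝ)
    (hsub : ∀ g h : G, ℓ₁ (g * h) ≤ ℓ₁ g + ℓ₁ h) (h1 : ℓ₁ 1 = 0)
    (hnn : ∀ g : G, 0 ≤ ℓ₂ g) (C₂ : ℝ)
    (hα : ∀ g : G, 1 ≤ ℓ₂ g →
      ∃ (n : ℕ) (c : ℕ → G), c 0 = 1 ∧ c n = g ∧
        (∀ i < n, ℓ₂ ((c i)⁻¹ * c (i + 1)) ≤ 1) ∧ (n : ℝ) ≤ C₂ * ℓ₂ g)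
    (M : ℝ) (hM0 : 0 ≤ M) (hM : ∀ g : G, ℓ₂ g ≤ 1 → ℓ₁ g ≤ M) :
    ∀ g : G, ℓ₁ g ≤ max (C₂ * M) 0 * ℓ₂ g + M := by
  intro g
  by_cases hg : 1 ≤ ℓ₂ g
  · obtain ⟨n, c, hc0, hcn, hstep, hn⟩ := hα g hg
    have key : ∀ k, k ≤ n → ℓ₁ (c k) ≤ (k : ℝ) * M := by
      intro k hk
      induction k with
      | zero => simp [hc0, h1]
      | succ k ih =>
        have h1' : ℓ₁ (c (k + 1)) ≤ ℓ₁ (c k) + ℓ₁ ((c k)⁻¹ * c (k + 1)) := by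
          have := hsub (c k) ((c k)⁻¹ * c (k + 1))
          simpa using this
        have h2' : ℓ₁ ((c k)⁻¹ * c (k + 1)) ≤ M :=
          hM _ (hstep k (by omega))
        have := ih (by omega)
        push_cast
        linarith
    have h3 : ℓ₁ g ≤ (n : ℝ) * M := hcn ▸ key n le_rfl
    have h4 : (n : ℝ) * M ≤ C₂ * ℓ₂ g * M :=
      mul_le_mul_of_nonneg_right hn hM0
    have h5 : C₂ * ℓ₂ g * M ≤ max (C₂ * M) 0 * ℓ₂ g := by
      have : C₂ * ℓ₂ g * M = (C₂ * M) * ℓ₂ g := by ring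
      rw [this]
      exact mul_le_mul_of_nonneg_right (le_max_left _ _) (hnn g)
    linarith
  · have := hM g (le_of_not_ge hg)
    have h6 : 0 ≤ max (C₂ * M) 0 * ℓ₂ g :=
      mul_nonneg (le_max_right _ _) (hnn g)
    linarith

/-- Proposition on equivalence of symmetric length functions.
Let `G` be a locally compact topological group and `ℓ₁`, `ℓ₂` symmetric length
functions on `G` satisfying condition (α).  If `ℓ₁` is bounded on
`{g | ℓ₂ g ≤ 1}` and `ℓ₂` is bounded on `{g | ℓ₁ g ≤ 1}`, then `ℓ₁` and `ℓ₂`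
are equivalent at infinity. -/
theorem stmt2
    (G : Type*) [Group G] [TopologicalSpace G] [IsTopologicalGroup G]
    [LocallyCompactSpace G]
    (ℓ₁ ℓ₂ : G → ℝ)
    (h₁len : IsLengthFunction ℓ₁) (h₂len : IsLengthFunction ℓ₂)
    (h₁sym : IsSymmetricLength ℓ₁) (h₂sym : IsSymmetricLength ℓ₂)
    (h₁α : CondAlpha ℓ₁) (h₂α : CondAlpha ℓ₂)
    (h₁bdd : Bornology.IsBounded (ℓ₁ '' {g : G | ℓ₂ g ≤ 1}))
    (h₂bdd : Bornology.IsBounded (ℓ₂ '' {g : G | ℓ₁ g ≤ 1})) :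
    ∃ C D : ℝ, 0 ≤ C ∧ 0 ≤ D ∧
      ∀ g : G, ℓ₁ g ≤ C * ℓ₂ g + D ∧ ℓ₂ g ≤ C * ℓ₁ g + D := by
  obtain ⟨C₂, hα₂⟩ := h₂α
  obtain ⟨C₁, hα₁⟩ := h₁α
  obtain ⟨M₁, hM₁⟩ := h₁bdd.exists_norm_le
  obtain ⟨M₂, hM₂⟩ := h₂bdd.exists_norm_le
  have h1nn : ∀ g : G, 0 ≤ ℓ₁ g := by
    intro g
    have := h₁len.2 g g⁻¹
    rw [mul_inv_cancel, h₁sym.1, h₁sym.2] at this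
    linarith
  have h2nn : ∀ g : G, 0 ≤ ℓ₂ g := by
    intro g
    have := h₂len.2 g g⁻¹
    rw [mul_inv_cancel, h₂sym.1, h₂sym.2] at this
    linarith
  have hM₁' : ∀ g : G, ℓ₂ g ≤ 1 → ℓ₁ g ≤ M₁ := by
    intro g hg
    have := hM₁ (ℓ₁ g) ⟨g, hg, rfl⟩
    rw [Real.norm_eq_abs, abs_le] at this
    exact this.2
  have hM₂' : ∀ g : G, ℓ₁ g ≤ 1 → ℓ₂ g ≤ M₂ := by
    intro g hg
    have := hM₂ (ℓ₂ g) ⟨g, hg, rfl⟩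
    rw [Real.norm_eq_abs, abs_le] at this
    exact this.2
  have hM₁0 : 0 ≤ M₁ := le_trans (h₁sym.1 ▸ h1nn 1) (hM₁' 1 (by simp [h₂sym.1]))
  have hM₂0 : 0 ≤ M₂ := le_trans (h₂sym.1 ▸ h2nn 1) (hM₂' 1 (by simp [h₁sym.1]))
  have k1 := stmt2_aux ℓ₁ ℓ₂ h₁len.2 h₁sym.1 h2nn C₂ hα₂ M₁ hM₁0 hM₁'
  have k2 := stmt2_aux ℓ₂ ℓ₁ h₂len.2 h₂sym.1 h1nn C₁ hα₁ M₂ hM₂0 hM₂'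
  refine ⟨max (max (C₂ * M₁) 0) (max (C₁ * M₂) 0), max M₁ M₂,
    le_trans (le_max_right _ _) (le_max_left _ _), le_max_of_le_left hM₁0, ?_⟩
  intro g
  constructor
  · have := k1 g
    have h7 : max (C₂ * M₁) 0 * ℓ₂ g ≤ max (max (C₂ * M₁) 0) (max (C₁ * M₂) 0) * ℓ₂ g :=
      mul_le_mul_of_nonneg_right (le_max_left _ _) (h2nn g)
    have h8 : M₁ ≤ max M₁ M₂ := le_max_left _ _
    linarith
  · have := k2 g
    have h7 : max (C₁ * M₂) 0 * ℓ₁ g ≤ max (max (C₂ * M₁) 0) (max (C₁ * M₂) 0) * ℓ₁ g :=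
      mul_le_mul_of_nonneg_right (le_max_right _ _) (h1nn g)
    have h8 : M₂ ≤ max M₁ M₂ := le_max_right _ _
    linarith
end

section
/- Let g be a nilpotent real Lie algebra with lower central series g = g₁ ⊇ g₂ ⊇ ⋯ ⊇ g_k, g_{k+1} = 0, and fix subspaces v₁, …, v_k with v_i ⊕ g_{i+1} = g_i for each i. Define subspaces v^{(1)} := v₁ and v^{(j)} := span{[x, y] : x ∈ v₁, y ∈ v^{(j−1)}} for j > 1. Then for every j = 1, …, k one has g_j = v^{(j)} + v^{(j+1)} + ⋯ + v^{(k)} (a sum of subspaces). -/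
/-- The linear span of all brackets `⁅x, y⁆` with `x ∈ V`, `y ∈ W`. -/
noncomputable def bracketSpan {g : Type*} [LieRing g] [LieAlgebra ℝ g]
    (V W : Submodule ℝ g) : Submodule ℝ g :=
  Submodule.span ℝ {z : g | ∃ x ∈ V, ∃ y ∈ W, z = ⁅x, y⁆}

/-- The subspaces `v^{(j)}`: `v^{(1)} = v₁` and `v^{(j)} = [v₁, v^{(j-1)}]`
(span of brackets) for `j > 1`; here `vIter v₁ (j - 1) = v^{(j)}`. -/
noncomputable def vIter {g : Type*} [LieRing g] [LieAlgebra ℝ g]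
    (v₁ : Submodule ℝ g) : ℕ → Submodule ℝ g
  | 0 => v₁
  | j + 1 => bracketSpan v₁ (vIter v₁ j)

section Aux

variable {g : Type*} [LieRing g] [LieAlgebra ℝ g]

local notation "lcs" => LieModule.lowerCentralSeries ℝ g g

/-- `[g_{a+1}, g_{b+1}] ⊆ g_{a+b+2}` at the element level. -/
lemma lcs_lie_mem : ∀ a b : ℕ, ∀ x y : g,
    x ∈ lcs a → y ∈ lcs b → ⁅x, y⁆ ∈ lcs (a + b + 1) := by
  intro a
  induction a with
  | zero =>
    intro b x y _ hy
    rw [Nat.zero_add, LieModule.lowerCentralSeries_succ]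
    exact LieSubmodule.lie_mem_lie (LieSubmodule.mem_top x) hy
  | succ a ih =>
    intro b x y hx hy
    have hx' : x ∈ LieSubmodule.toSubmodule (lcs (a + 1)) := hx
    clear hx
    rw [LieModule.lowerCentralSeries_succ,
      LieSubmodule.lieIdeal_oper_eq_linear_span'] at hx'
    induction hx' using Submodule.span_induction with
    | mem z hz =>
      obtain ⟨u, -, n, hn, rfl⟩ := hz
      rw [lie_lie]
      have h1 : ⁅u, ⁅n, y⁆⁆ ∈ lcs (a + b + 1 + 1) := by
        rw [LieModule.lowerCentralSeries_succ]
        exact LieSubmodule.lie_mem_lie (LieSubmodule.mem_top u) (ih b n y hn hy)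
      have h2 : ⁅u, y⁆ ∈ lcs (b + 1) := by
        rw [LieModule.lowerCentralSeries_succ]
        exact LieSubmodule.lie_mem_lie (LieSubmodule.mem_top u) hy
      have h3 : ⁅n, ⁅u, y⁆⁆ ∈ lcs (a + (b + 1) + 1) := ih (b + 1) n ⁅u, y⁆ hn h2
      have e1 : a + b + 1 + 1 = a + 1 + b + 1 := by omega
      have e2 : a + (b + 1) + 1 = a + 1 + b + 1 := by omega
      rw [e1] at h1; rw [e2] at h3
      exact sub_mem h1 h3
    | zero => simp
    | add z w _ _ hz hw => rw [add_lie]; exact add_mem hz hw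
    | smul c z _ hz => rw [smul_lie]; exact Submodule.smul_mem _ c hz

lemma vIter_le_lcs (v₁ : Submodule ℝ g) : ∀ n : ℕ, vIter v₁ n ≤ LieSubmodule.toSubmodule (lcs n) := by
  intro n
  induction n with
  | zero =>
    rw [vIter]
    simp [LieModule.lowerCentralSeries_zero, LieSubmodule.top_toSubmodule]
  | succ n ih =>
    rw [vIter, bracketSpan]
    rw [Submodule.span_le]
    rintro z ⟨x, -, y, hy, rfl⟩
    have : y ∈ lcs n := ih hy
    rw [SetLike.mem_coe, LieSubmodule.mem_toSubmodule, LieModule.lowerCentralSeries_succ]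
    exact LieSubmodule.lie_mem_lie (LieSubmodule.mem_top x) this

lemma lcs_eq_vIter_sup (v₁ : Submodule ℝ g)
    (h1 : v₁ ⊔ LieSubmodule.toSubmodule (lcs 1) = LieSubmodule.toSubmodule (lcs 0)) :
    ∀ n : ℕ, LieSubmodule.toSubmodule (lcs n)
      = vIter v₁ n ⊔ LieSubmodule.toSubmodule (lcs (n + 1)) := by
  have htop : v₁ ⊔ LieSubmodule.toSubmodule (lcs 1) = ⊤ := by
    rw [h1, LieModule.lowerCentralSeries_zero, LieSubmodule.top_toSubmodule]
  intro n
  induction n with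
  | zero =>
    rw [vIter, LieModule.lowerCentralSeries_zero, LieSubmodule.top_toSubmodule, ← htop]
  | succ n ih =>
    apply le_antisymm
    · conv_lhs =>
        rw [LieModule.lowerCentralSeries_succ, LieSubmodule.lieIdeal_oper_eq_linear_span']
      rw [Submodule.span_le]
      rintro z ⟨x, -, y, hy, rfl⟩
      have hx : x ∈ v₁ ⊔ LieSubmodule.toSubmodule (lcs 1) := by simp only [htop, Submodule.mem_top]
      obtain ⟨x₁, hx₁, x₂, hx₂, rfl⟩ := Submodule.mem_sup.mp hx
      have hy' : y ∈ vIter v₁ n ⊔ LieSubmodule.toSubmodule (lcs (n + 1)) := by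
        rw [← ih]; exact hy
      obtain ⟨y₁, hy₁, y₂, hy₂, rfl⟩ := Submodule.mem_sup.mp hy'
      have hsplit : ⁅x₁ + x₂, y₁ + y₂⁆ = ⁅x₁, y₁⁆ + ⁅x₁, y₂⁆ + ⁅x₂, y₁ + y₂⁆ := by
        rw [add_lie, lie_add]
      rw [SetLike.mem_coe, hsplit]
      refine add_mem (add_mem ?_ ?_) ?_
      · apply Submodule.mem_sup_left
        rw [vIter, bracketSpan]
        exact Submodule.subset_span ⟨x₁, hx₁, y₁, hy₁, rfl⟩
      · apply Submodule.mem_sup_right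
        rw [LieSubmodule.mem_toSubmodule, LieModule.lowerCentralSeries_succ]
        exact LieSubmodule.lie_mem_lie (LieSubmodule.mem_top x₁) hy₂
      · apply Submodule.mem_sup_right
        have := lcs_lie_mem 1 n x₂ (y₁ + y₂) hx₂ hy
        have e : 1 + n + 1 = n + 1 + 1 := by omega
        rw [e] at this
        exact this
    · refine sup_le (vIter_le_lcs v₁ (n + 1)) ?_
      rw [LieSubmodule.toSubmodule_le_toSubmodule]
      exact LieModule.antitone_lowerCentralSeries ℝ g g (Nat.le_succ _)

end Aux

/-- Let `g` be a nilpotent real Lie algebra with lower central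
series `g = g₁ ⊇ ⋯ ⊇ g_k`, `g_{k+1} = 0` (in Mathlib's indexing
`gⱼ = LieModule.lowerCentralSeries ℝ g g (j-1)`), and subspaces `vᵢ` with
`vᵢ ⊕ g_{i+1} = gᵢ`.  With `v^{(1)} := v₁`, `v^{(j)} := [v₁, v^{(j-1)}]`, one
has `gⱼ = v^{(j)} + v^{(j+1)} + ⋯ + v^{(k)}` for every `j = 1, …, k`. -/
theorem stmt9
    (g : Type*) [LieRing g] [LieAlgebra ℝ g]
    (k : ℕ) (hk : 1 ≤ k)
    (hnilp : LieModule.lowerCentralSeries ℝ g g k = ⊥)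
    (v : ℕ → Submodule ℝ g)
    (hdisj : ∀ i, 1 ≤ i → i ≤ k →
      v i ⊓ (LieModule.lowerCentralSeries ℝ g g i : Submodule ℝ g) = ⊥)
    (hsup : ∀ i, 1 ≤ i → i ≤ k →
      v i ⊔ (LieModule.lowerCentralSeries ℝ g g i : Submodule ℝ g)
        = (LieModule.lowerCentralSeries ℝ g g (i - 1) : Submodule ℝ g)) :
    ∀ j, 1 ≤ j → j ≤ k →
      (LieModule.lowerCentralSeries ℝ g g (j - 1) : Submodule ℝ g)
        = ∑ i ∈ Finset.Icc j k, vIter (v 1) (i - 1) := by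
  have h1 : v 1 ⊔ LieSubmodule.toSubmodule (LieModule.lowerCentralSeries ℝ g g 1)
      = LieSubmodule.toSubmodule (LieModule.lowerCentralSeries ℝ g g 0) := hsup 1 le_rfl hk
  have key := lcs_eq_vIter_sup (v 1) h1
  have hbot : LieSubmodule.toSubmodule (LieModule.lowerCentralSeries ℝ g g k) = ⊥ := by
    rw [hnilp, LieSubmodule.bot_toSubmodule]
  -- downward induction via the gap `d = k - j`
  have aux : ∀ d : ℕ, ∀ j : ℕ, 1 ≤ j → j + d = k →
      LieSubmodule.toSubmodule (LieModule.lowerCentralSeries ℝ g g (j - 1))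
        = ∑ i ∈ Finset.Icc j k, vIter (v 1) (i - 1) := by
    intro d
    induction d with
    | zero =>
      intro j hj hjk
      have hjk' : j = k := by omega
      subst hjk'
      rw [Finset.Icc_self, Finset.sum_singleton]
      have e : j - 1 + 1 = j := by omega
      rw [key (j - 1), e, hbot, sup_bot_eq]
    | succ d ih =>
      intro j hj hjk
      have hicc : Finset.Icc j k = insert j (Finset.Icc (j + 1) k) := by
        ext i; simp only [Finset.mem_Icc, Finset.mem_insert]; omega
      have hnotmem : j ∉ Finset.Icc (j + 1) k := by simp
      rw [hicc, Finset.sum_insert hnotmem]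
      have ihj := ih (j + 1) (by omega) (by omega)
      have e : j + 1 - 1 = j := by omega
      rw [e] at ihj
      have e2 : j - 1 + 1 = j := by omega
      rw [key (j - 1), e2, ihj, Submodule.add_eq_sup]
  intro j hj hjk
  exact aux (k - j) j hj (by omega)
end

section
/- Fix positive integers w₁, …, w_m, and for a multi-index α ∈ ℤ₊^m set w(α) := Σ_{i=1}^m w_i·α_i. For s ≥ 0 define Φ(s) := Σ_{α ∈ ℤ₊^m} (s/w(α))^{w(α)}, with the term at α = 0 equal to 1 (this series converges for every s ≥ 0). Then there exist positive constants c, a, C, A such that c·e^{a·s} ≤ Φ(s) ≤ C·e^{A·s} for all s ≥ 0. -/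
/-- The weight `w(α) = Σᵢ wᵢ·αᵢ` of a multi-index `α ∈ ℤ₊^m`. -/
def wtSum {m : ℕ} (w : Fin m → ℕ) (α : Fin m → ℕ) : ℕ :=
  ∑ i, w i * α i

/-- The weight sequence `M_α := w(α)^{-w(α)}` (`M₀ := 1`). -/
noncomputable def Mwt {m : ℕ} (w : Fin m → ℕ) (α : Fin m → ℕ) : ℝ :=
  if α = 0 then 1 else ((wtSum w α : ℝ)) ^ (-(wtSum w α : ℝ))

/-- The growth function `Φ(s) = Σ_α (s/w(α))^{w(α)} = Σ_α M_α · s^{w(α)}`,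
with the term at `α = 0` equal to `1`. -/
noncomputable def PhiGrowth {m : ℕ} (w : Fin m → ℕ) (s : ℝ) : ℝ :=
  ∑' α : Fin m → ℕ, Mwt w α * s ^ (wtSum w α)

lemma summable_geom_pi (m : ℕ) :
    Summable (fun α : Fin m → ℕ => ∏ i, (2⁻¹ : ℝ) ^ α i) := by
  induction m with
  | zero => exact .of_finite
  | succ n ih =>
    rw [← (Fin.consEquiv fun _ => ℕ).summable_iff]
    have h : ((fun α : Fin (n+1) → ℕ => ∏ i, (2⁻¹ : ℝ) ^ α i) ∘ (Fin.consEquiv fun _ => ℕ))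
        = fun p : ℕ × (Fin n → ℕ) => (2⁻¹ : ℝ) ^ p.1 * ∏ i, (2⁻¹ : ℝ) ^ p.2 i := by
      funext p
      simp [Fin.consEquiv, Fin.prod_univ_succ, mul_comm]
    rw [h]
    have hg : Summable (fun n : ℕ => (2⁻¹ : ℝ) ^ n) :=
      summable_geometric_of_lt_one (by norm_num) (by norm_num)
    apply Summable.mul_of_nonneg hg ih (fun n => pow_nonneg (by norm_num) _)
      (fun β => Finset.prod_nonneg fun i _ => pow_nonneg (by norm_num) _)

lemma wtSum_pos {m : ℕ} (w : Fin m → ℕ) (hw : ∀ i, 1 ≤ w i) {α : Fin m → ℕ}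
    (hα : α ≠ 0) : 1 ≤ wtSum w α := by
  obtain ⟨j, hj⟩ := Function.ne_iff.mp hα
  have hj' : α j ≠ 0 := hj
  have h1 : 1 ≤ w j * α j :=
    Nat.one_le_iff_ne_zero.mpr (Nat.mul_ne_zero (Nat.one_le_iff_ne_zero.mp (hw j)) hj')
  exact h1.trans (Finset.single_le_sum (f := fun i => w i * α i)
    (fun i _ => Nat.zero_le _) (Finset.mem_univ j))

lemma Mwt_nonneg {m : ℕ} (w : Fin m → ℕ) (α : Fin m → ℕ) : 0 ≤ Mwt w α := by
  unfold Mwt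
  split
  · norm_num
  · exact Real.rpow_nonneg (Nat.cast_nonneg _) _

lemma Mwt_ne {m : ℕ} (w : Fin m → ℕ) {α : Fin m → ℕ} (hα : α ≠ 0) :
    Mwt w α = (((wtSum w α : ℝ)) ^ (wtSum w α))⁻¹ := by
  rw [Mwt, if_neg hα, Real.rpow_neg (Nat.cast_nonneg _), Real.rpow_natCast]

lemma term_le {m : ℕ} (w : Fin m → ℕ) (hw : ∀ i, 1 ≤ w i) {s : ℝ} (hs : 0 ≤ s)
    (α : Fin m → ℕ) :
    Mwt w α * s ^ wtSum w α ≤ Real.exp (2 * s) * ∏ i, (2⁻¹ : ℝ) ^ α i := by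
  by_cases hα : α = 0
  · subst hα
    have h0 : wtSum w (0 : Fin m → ℕ) = 0 := by simp [wtSum]
    simp only [Mwt, if_pos rfl, h0, pow_zero, one_mul, Pi.zero_apply]
    simp only [pow_zero, Finset.prod_const_one, mul_one]
    exact Real.one_le_exp (by positivity)
  · set n := wtSum w α with hn
    have hn1 : 1 ≤ n := wtSum_pos w hw hα
    have hnR : (1 : ℝ) ≤ (n : ℝ) := by exact_mod_cast hn1
    have hnpos : (0 : ℝ) < (n : ℝ) := by linarith
    have hnn : (0 : ℝ) < (n : ℝ) ^ n := by positivity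
    -- key: s ^ n ≤ n^n * exp (2s) * 2⁻¹^n
    have hstep : 2 * s ≤ (n : ℝ) * Real.exp (2 * s / n) := by
      have h1 : 2 * s / n ≤ Real.exp (2 * s / n) :=
        le_trans (by linarith) (Real.add_one_le_exp _)
      calc 2 * s = (n : ℝ) * (2 * s / n) := by field_simp
        _ ≤ (n : ℝ) * Real.exp (2 * s / n) := by
            exact mul_le_mul_of_nonneg_left h1 (le_of_lt hnpos)
    have h3 : (2 * s) ^ n ≤ ((n : ℝ) * Real.exp (2 * s / n)) ^ n :=
      pow_le_pow_left₀ (by positivity) hstep n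
    have hexp : Real.exp (2 * s / n) ^ n = Real.exp (2 * s) := by
      rw [← Real.exp_nat_mul]
      congr 1
      field_simp
    rw [mul_pow, mul_pow, hexp] at h3
    -- h3 : 2^n * s^n ≤ n^n * exp (2s)
    have h2 : s ^ n ≤ (n : ℝ) ^ n * Real.exp (2 * s) * 2⁻¹ ^ n := by
      calc s ^ n = (2 : ℝ) ^ n * s ^ n * 2⁻¹ ^ n := by
            rw [mul_comm ((2:ℝ)^n), mul_assoc, ← mul_pow]; norm_num
        _ ≤ (n : ℝ) ^ n * Real.exp (2 * s) * 2⁻¹ ^ n :=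
            mul_le_mul_of_nonneg_right h3 (by positivity)
    have hprod : (2⁻¹ : ℝ) ^ n ≤ ∏ i, (2⁻¹ : ℝ) ^ α i := by
      rw [Finset.prod_pow_eq_pow_sum]
      apply pow_le_pow_of_le_one (by norm_num) (by norm_num)
      apply Finset.sum_le_sum
      intro i _
      exact Nat.le_mul_of_pos_left (α i) (hw i)
    calc Mwt w α * s ^ n = ((n : ℝ) ^ n)⁻¹ * s ^ n := by rw [Mwt_ne w hα]
      _ ≤ ((n : ℝ) ^ n)⁻¹ * ((n : ℝ) ^ n * Real.exp (2 * s) * 2⁻¹ ^ n) :=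
          mul_le_mul_of_nonneg_left h2 (by positivity)
      _ = Real.exp (2 * s) * 2⁻¹ ^ n := by field_simp
      _ ≤ Real.exp (2 * s) * ∏ i, (2⁻¹ : ℝ) ^ α i :=
          mul_le_mul_of_nonneg_left hprod (Real.exp_nonneg _)

/-- For positive integers `w₁, …, w_m` (with `m ≥ 1`), the
growth function `Φ` associated with the weight sequence `M_α = w(α)^{-w(α)}`
satisfies `c·e^{a·s} ≤ Φ(s) ≤ C·e^{A·s}` for all `s ≥ 0`, for suitable positive
constants `c, a, C, A`. -/
theorem stmt12
    (m : ℕ) (hm : 1 ≤ m) (w : Fin m → ℕ) (hw : ∀ i, 1 ≤ w i) :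
    ∃ c a C A : ℝ, 0 < c ∧ 0 < a ∧ 0 < C ∧ 0 < A ∧
      ∀ s : ℝ, 0 ≤ s →
        c * Real.exp (a * s) ≤ PhiGrowth w s ∧
        PhiGrowth w s ≤ C * Real.exp (A * s) := by
  set i0 : Fin m := ⟨0, hm⟩
  set W : ℕ := w i0 with hW
  have hW1 : 1 ≤ W := hw i0
  have hWR : (1 : ℝ) ≤ (W : ℝ) := by exact_mod_cast hW1
  set T : ℝ := ∑' α : Fin m → ℕ, ∏ i, (2⁻¹ : ℝ) ^ α i with hT
  have hgs := summable_geom_pi m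
  have hT1 : 1 ≤ T := by
    have h0 := hgs.le_tsum 0 (fun β _ => Finset.prod_nonneg fun i _ => by positivity)
    simp only [Pi.zero_apply, pow_zero, Finset.prod_const_one] at h0
    exact h0
  refine ⟨Real.exp (-(W : ℝ)), (Real.exp 1)⁻¹, T, 2, Real.exp_pos _,
    inv_pos.mpr (Real.exp_pos _), by linarith, by norm_num, ?_⟩
  intro s hs
  have hterm_nonneg : ∀ α : Fin m → ℕ, 0 ≤ Mwt w α * s ^ wtSum w α :=
    fun α => mul_nonneg (Mwt_nonneg w α) (pow_nonneg hs _)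
  have hsum : Summable (fun α : Fin m → ℕ => Mwt w α * s ^ wtSum w α) :=
    Summable.of_nonneg_of_le hterm_nonneg (term_le w hw hs) (hgs.mul_left _)
  constructor
  · -- lower bound
    set e : ℝ := Real.exp 1 with he
    have he1 : (1 : ℝ) ≤ e := Real.one_le_exp zero_le_one
    have hepos : (0 : ℝ) < e := by linarith
    rw [← Real.exp_add]
    set k : ℕ := ⌊s / (e * W)⌋₊ with hk
    rcases Nat.eq_zero_or_pos k with hk0 | hk1
    · -- small s : use the α = 0 term, which equals 1
      have hlt : s / (e * W) < 1 := by
        by_contra hcon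
        push_neg at hcon
        have : 1 ≤ k := Nat.le_floor (by exact_mod_cast hcon)
        omega
      have hsW : s < e * W := (div_lt_one (by positivity)).mp hlt
      have h1 : Real.exp (-(W:ℝ) + e⁻¹ * s) ≤ 1 := by
        rw [Real.exp_le_one_iff]
        have h := mul_lt_mul_of_pos_left hsW (inv_pos.mpr hepos)
        have hE : e⁻¹ * (e * (W : ℝ)) = W := by field_simp
        rw [hE] at h
        linarith
      have h2 : (1 : ℝ) ≤ PhiGrowth w s := by
        have h00 := hsum.le_tsum 0 (fun β _ => hterm_nonneg β)
        have hM : Mwt w (0 : Fin m → ℕ) = 1 := by simp [Mwt]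
        have h0 : wtSum w (0 : Fin m → ℕ) = 0 := by simp [wtSum]
        rw [hM, h0, pow_zero, mul_one] at h00
        exact h00
      linarith
    · -- large s : use the term α = Pi.single i0 k
      set α₀ : Fin m → ℕ := Pi.single i0 k with hα₀
      have hne : α₀ ≠ 0 := by
        intro h
        have := congrFun h i0
        simp [hα₀] at this
        omega
      have hwt : wtSum w α₀ = W * k := by
        rw [wtSum, Finset.sum_eq_single i0]
        · simp [hα₀, hW]
        · intro b _ hb
          simp [hα₀, Pi.single_eq_of_ne hb]
        · intro h
          exact absurd (Finset.mem_univ i0) h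
      set n : ℕ := W * k with hn
      have hn1 : 1 ≤ n := Nat.one_le_iff_ne_zero.mpr (Nat.mul_ne_zero (by omega) (by omega))
      have hnR : (1 : ℝ) ≤ (n : ℝ) := by exact_mod_cast hn1
      have hnn : (0 : ℝ) < (n : ℝ) ^ n := by positivity
      have hkle : (k : ℝ) ≤ s / (e * W) := Nat.floor_le (by positivity)
      have hen : e * n ≤ s := by
        have : (n : ℝ) = (W : ℝ) * k := by exact_mod_cast hn
        rw [this]
        rw [le_div_iff₀ (by positivity)] at hkle
        nlinarith
      have hklt : s / (e * W) < k + 1 := Nat.lt_floor_add_one _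
      have hsn : s < e * (n + W) := by
        have : (n : ℝ) = (W : ℝ) * k := by exact_mod_cast hn
        rw [div_lt_iff₀ (by positivity)] at hklt
        nlinarith
      -- term value : ((n)^n)⁻¹ * s^n ≥ exp n
      have hpow : Real.exp n * (n : ℝ) ^ n ≤ s ^ n := by
        have h1 : (e * (n : ℝ)) ^ n ≤ s ^ n := pow_le_pow_left₀ (by positivity) hen n
        rwa [mul_pow, he, Real.exp_one_pow] at h1
      have hterm : Real.exp (n : ℝ) ≤ Mwt w α₀ * s ^ wtSum w α₀ := by
        rw [Mwt_ne w hne, hwt]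
        calc Real.exp (n : ℝ) = ((n : ℝ) ^ n)⁻¹ * (Real.exp (n : ℝ) * (n : ℝ) ^ n) := by
              field_simp
          _ ≤ ((n : ℝ) ^ n)⁻¹ * s ^ n := mul_le_mul_of_nonneg_left hpow (by positivity)
      have hle : Real.exp (-(W:ℝ) + e⁻¹ * s) ≤ Real.exp (n : ℝ) := by
        apply Real.exp_le_exp.mpr
        have h := mul_lt_mul_of_pos_left hsn (inv_pos.mpr hepos)
        have hE : e⁻¹ * (e * ((n : ℝ) + W)) = (n : ℝ) + W := by field_simp
        rw [hE] at h
        linarith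
      have := hsum.le_tsum α₀ (fun β _ => hterm_nonneg β)
      calc Real.exp (-(W:ℝ) + e⁻¹ * s) ≤ Real.exp (n:ℝ) := hle
        _ ≤ Mwt w α₀ * s ^ wtSum w α₀ := hterm
        _ ≤ PhiGrowth w s := this
  · -- upper bound
    have h1 : PhiGrowth w s ≤ ∑' α : Fin m → ℕ, Real.exp (2 * s) * ∏ i, (2⁻¹ : ℝ) ^ α i :=
      Summable.tsum_le_tsum (term_le w hw hs) hsum (hgs.mul_left _)
    rw [tsum_mul_left] at h1
    calc PhiGrowth w s ≤ Real.exp (2 * s) * T := h1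
      _ = T * Real.exp (2 * s) := mul_comm _ _
end

section
/- Let w₁, …, w_s and p be positive integers with p ≥ w₁ + ⋯ + w_s, and let t₁, …, t_s be complex numbers. Then |t₁·t₂⋯t_s|^{1/p} ≤ Σ_{i=1}^s |t_i|^{1/w_i} + 1. -/
/-- Let `w₁, …, w_s` and `p` be positive integers with
`p ≥ w₁ + ⋯ + w_s`, and let `t₁, …, t_s` be complex numbers.  Then
`|t₁·t₂⋯t_s|^{1/p} ≤ Σᵢ |tᵢ|^{1/wᵢ} + 1`. -/
theorem stmt14
    (s : ℕ) (w : Fin s → ℕ) (hw : ∀ i, 1 ≤ w i)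
    (p : ℕ) (hp1 : 1 ≤ p) (hp : (∑ i, w i) ≤ p)
    (t : Fin s → ℂ) :
    ‖∏ i, t i‖ ^ ((1 : ℝ) / p) ≤ (∑ i, ‖t i‖ ^ ((1 : ℝ) / (w i))) + 1 := by
  set S : ℝ := (∑ i, ‖t i‖ ^ ((1 : ℝ) / (w i))) + 1 with hS
  have hsum_nonneg : ∀ i ∈ Finset.univ, (0:ℝ) ≤ ‖t i‖ ^ ((1 : ℝ) / (w i)) :=
    fun i _ => Real.rpow_nonneg (norm_nonneg _) _
  have hS1 : (1:ℝ) ≤ S := by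
    have h := Finset.sum_nonneg hsum_nonneg
    rw [hS]; linarith
  have hS0 : (0:ℝ) ≤ S := le_trans zero_le_one hS1
  have hSi : ∀ i, ‖t i‖ ^ ((1 : ℝ) / (w i)) ≤ S := by
    intro i
    have h1 : ‖t i‖ ^ ((1 : ℝ) / (w i)) ≤ ∑ j, ‖t j‖ ^ ((1 : ℝ) / (w j)) :=
      Finset.single_le_sum hsum_nonneg (Finset.mem_univ i)
    linarith
  have hti : ∀ i, ‖t i‖ ≤ S ^ (w i) := by
    intro i
    have hwne : (w i : ℝ) ≠ 0 := Nat.cast_ne_zero.mpr (Nat.one_le_iff_ne_zero.mp (hw i))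
    have heq : (‖t i‖ ^ ((1 : ℝ) / (w i))) ^ (w i) = ‖t i‖ := by
      rw [← Real.rpow_natCast (‖t i‖ ^ ((1 : ℝ) / (w i))) (w i),
        ← Real.rpow_mul (norm_nonneg _), one_div,
        inv_mul_cancel₀ hwne, Real.rpow_one]
    calc ‖t i‖ = (‖t i‖ ^ ((1 : ℝ) / (w i))) ^ (w i) := heq.symm
    _ ≤ S ^ (w i) := pow_le_pow_left₀ (Real.rpow_nonneg (norm_nonneg _) _) (hSi i) _
  have hprod : ‖∏ i, t i‖ ≤ S ^ p := by
    calc ‖∏ i, t i‖ = ∏ i, ‖t i‖ := norm_prod _ _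
    _ ≤ ∏ i, S ^ (w i) :=
        Finset.prod_le_prod (fun i _ => norm_nonneg _) (fun i _ => hti i)
    _ = S ^ (∑ i, w i) := Finset.prod_pow_eq_pow_sum _ _ _
    _ ≤ S ^ p := pow_le_pow_right₀ hS1 hp
  have hfinal : ‖∏ i, t i‖ ^ ((1 : ℝ) / p) ≤ (S ^ p) ^ ((1 : ℝ) / p) :=
    Real.rpow_le_rpow (norm_nonneg _) hprod (by positivity)
  have hpne : (p : ℝ) ≠ 0 := Nat.cast_ne_zero.mpr (Nat.one_le_iff_ne_zero.mp hp1)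
  have : (S ^ p) ^ ((1 : ℝ) / p) = S := by
    rw [← Real.rpow_natCast S p, ← Real.rpow_mul hS0, one_div,
      mul_inv_cancel₀ hpne, Real.rpow_one]
  linarith [hfinal, this ▸ hfinal]
end
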